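/- Let d, d' ≥ 1, let Ω : ℝ^d × ℝ^{d'} → ℝ^{d'} and Ψ : ℝ^d × ℝ^{d'} → ℝ be differentiable at a point (α₀, γ₀) with Ω(α₀, γ₀) = 0, and assume the partial Jacobian matrix ∂_γ Ω(α₀, γ₀) is invertible. Let γ : ℝ^d → ℝ^{d'} be differentiable at α₀ with γ(α₀) = γ₀ and Ω(α, γ(α)) = 0 for all α in a neighbourhood of α₀, and define ψ(α) = Ψ(α, γ(α)). Then there exists a unique vector λ₀ ∈ ℝ^{d'} such that (i) ∇ψ(α₀) = ∇_α Ψ(α₀, γ₀) + (∂_α Ω(α₀, γ₀))ᵀ λ₀ and (ii) 0 = ∇_γ Ψ(α₀, γ₀) + (∂_γ Ω(α₀, γ₀))ᵀ λ₀, where ∇_α, ∇_γ denote the gradients (transposed partial Jacobians) with respect to the first and second block of variables. -/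

import Mathlib

open Matrix BigOperators

/-- Lemma 3.5 (the Lagrange-multiplier lemma underlying reverse-mode automatic
differentiation): if `γ` is implicitly defined by the constraints `Ω(α, γ) = 0`
(with `∂_γ Ω` invertible at the point) and `ψ(α) = Ψ(α, γ(α))`, then there is a
unique multiplier `λ₀` with `∇ψ(α₀) = ∇_α Ψ + (∂_α Ω)ᵀ λ₀` and
`0 = ∇_γ Ψ + (∂_γ Ω)ᵀ λ₀`. -/
theorem stmt_10 (d d' : ℕ) (hd : 1 ≤ d) (hd' : 1 ≤ d')
    (Ω : (Fin d → ℝ) → (Fin d' → ℝ) → (Fin d' → ℝ))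
    (Ψ : (Fin d → ℝ) → (Fin d' → ℝ) → ℝ)
    (α₀ : Fin d → ℝ) (γ₀ : Fin d' → ℝ)
    (LΩ : ((Fin d → ℝ) × (Fin d' → ℝ)) →L[ℝ] (Fin d' → ℝ))
    (DΩα : Matrix (Fin d') (Fin d) ℝ) (DΩγ : Matrix (Fin d') (Fin d') ℝ)
    (hΩdiff : HasFDerivAt (fun p : (Fin d → ℝ) × (Fin d' → ℝ) => Ω p.1 p.2) LΩ (α₀, γ₀))
    (hLΩ : ∀ v w, LΩ (v, w) = DΩα.mulVec v + DΩγ.mulVec w)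
    (LΨ : ((Fin d → ℝ) × (Fin d' → ℝ)) →L[ℝ] ℝ)
    (gΨα : Fin d → ℝ) (gΨγ : Fin d' → ℝ)
    (hΨdiff : HasFDerivAt (fun p : (Fin d → ℝ) × (Fin d' → ℝ) => Ψ p.1 p.2) LΨ (α₀, γ₀))
    (hLΨ : ∀ v w, LΨ (v, w) = gΨα ⬝ᵥ v + gΨγ ⬝ᵥ w)
    (hΩ0 : Ω α₀ γ₀ = 0)
    (hinv : IsUnit DΩγ)
    (γ : (Fin d → ℝ) → (Fin d' → ℝ))
    (hγdiff : DifferentiableAt ℝ γ α₀) (hγ0 : γ α₀ = γ₀)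
    (hconstr : ∀ᶠ α in nhds α₀, Ω α (γ α) = 0)
    (ψ : (Fin d → ℝ) → ℝ) (hψ : ∀ α, ψ α = Ψ α (γ α)) :
    ∃! lam₀ : Fin d' → ℝ,
      (∀ v, fderiv ℝ ψ α₀ v = (gΨα + DΩαᵀ.mulVec lam₀) ⬝ᵥ v) ∧
        gΨγ + DΩγᵀ.mulVec lam₀ = 0 := by
  haveI : Invertible DΩγ := hinv.invertible
  set B : Matrix (Fin d') (Fin d') ℝ := ⅟DΩγ with hB
  set Lγ := fderiv ℝ γ α₀ with hLγdef
  have hLγ : HasFDerivAt γ Lγ α₀ := hγdiff.hasFDerivAt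
  have hpair : HasFDerivAt (fun α : Fin d → ℝ => (α, γ α))
      ((ContinuousLinearMap.id ℝ (Fin d → ℝ)).prod Lγ) α₀ :=
    HasFDerivAt.prodMk (hasFDerivAt_id α₀) hLγ
  have hΨ' : HasFDerivAt (fun p : (Fin d → ℝ) × (Fin d' → ℝ) => Ψ p.1 p.2) LΨ (α₀, γ α₀) := by
    rw [hγ0]; exact hΨdiff
  have hΩ' : HasFDerivAt (fun p : (Fin d → ℝ) × (Fin d' → ℝ) => Ω p.1 p.2) LΩ (α₀, γ α₀) := by
    rw [hγ0]; exact hΩdiff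
  -- derivative of ψ
  have hψD : HasFDerivAt ψ
      (LΨ.comp ((ContinuousLinearMap.id ℝ (Fin d → ℝ)).prod Lγ)) α₀ := by
    have := hΨ'.comp α₀ hpair
    exact this.congr_of_eventuallyEq (Filter.Eventually.of_forall fun α => hψ α)
  have hfd : ∀ v, fderiv ℝ ψ α₀ v = gΨα ⬝ᵥ v + gΨγ ⬝ᵥ Lγ v := by
    intro v
    rw [hψD.fderiv]
    simp [hLΨ]
  -- derivative of the constraint
  have hCD : HasFDerivAt (fun α => Ω α (γ α))
      (LΩ.comp ((ContinuousLinearMap.id ℝ (Fin d → ℝ)).prod Lγ)) α₀ :=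
    by have := hΩ'.comp α₀ hpair; exact this
  have hC0 : HasFDerivAt (fun α => Ω α (γ α)) (0 : (Fin d → ℝ) →L[ℝ] (Fin d' → ℝ)) α₀ :=
    (hasFDerivAt_const (0 : Fin d' → ℝ) α₀).congr_of_eventuallyEq hconstr
  have hZero : ∀ v, DΩα.mulVec v + DΩγ.mulVec (Lγ v) = 0 := by
    intro v
    have := hCD.unique hC0
    have h1 : (LΩ.comp ((ContinuousLinearMap.id ℝ (Fin d → ℝ)).prod Lγ)) v = 0 := by
      rw [this]; rfl
    simpa [hLΩ] using h1
  have hΩαγ : ∀ v, DΩα.mulVec v = -DΩγ.mulVec (Lγ v) := by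
    intro v; have := hZero v; linear_combination (norm := module) this
  refine ⟨-(Bᵀ.mulVec gΨγ), ⟨?_, ?_⟩, ?_⟩
  · intro v
    rw [hfd v]
    have key : DΩαᵀ.mulVec (-(Bᵀ.mulVec gΨγ)) ⬝ᵥ v = gΨγ ⬝ᵥ Lγ v := by
      rw [Matrix.mulVec_transpose, ← Matrix.dotProduct_mulVec, hΩαγ v,
        dotProduct_neg, neg_dotProduct, neg_neg,
        Matrix.dotProduct_mulVec, ← Matrix.mulVec_transpose,
        Matrix.mulVec_mulVec, ← Matrix.transpose_mul, (invOf_mul_self DΩγ : B * DΩγ = 1),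
        Matrix.transpose_one, Matrix.one_mulVec]
    rw [add_dotProduct, key]
  · rw [Matrix.mulVec_neg, Matrix.mulVec_mulVec, ← Matrix.transpose_mul,
      (invOf_mul_self DΩγ : B * DΩγ = 1), Matrix.transpose_one, Matrix.one_mulVec]
    simp
  · rintro l ⟨-, hl⟩
    have h1 : DΩγᵀ.mulVec l = -gΨγ := by
      linear_combination (norm := module) hl
    have : Bᵀ.mulVec (DΩγᵀ.mulVec l) = Bᵀ.mulVec (-gΨγ) := by rw [h1]
    rw [Matrix.mulVec_mulVec, ← Matrix.transpose_mul, (mul_invOf_self DΩγ : DΩγ * B = 1),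
      Matrix.transpose_one, Matrix.one_mulVec, Matrix.mulVec_neg] at this
    rw [this]
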